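/- Let two asynchronous networks be given on ℝ^m and ℝ^n, with finite index sets 𝒜_A, 𝒜_B, vector fields f_A^α (α ∈ 𝒜_A), f_B^β (β ∈ 𝒜_B), event maps ℰ_A, ℰ_B, and network vector fields F_A, F_B. Form the product asynchronous network on ℝ^{m+n} with index set 𝒜_A × 𝒜_B, vector fields f^{(α,β)}(X_A, X_B) = (f_A^α(X_A), f_B^β(X_B)), and event map ℰ(X_A, X_B) = (ℰ_A(X_A), ℰ_B(X_B)); its network vector field is F(X_A, X_B) = (F_A(X_A), F_B(X_B)). If φ_A : [0,∞) → ℝ^m and φ_B : [0,∞) → ℝ^n are complete integral curves of F_A and F_B respectively, then (φ_A, φ_B) : [0,∞) → ℝ^{m+n} is a complete integral curve of F. In particular, if both factor networks are proper (a complete integral curve exists through every point), then so is the product network. -/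

import Mathlib

open Set Filter Topology

/-- The domain `[0, T)`, where `T ∈ (0, ∞]` is encoded as an `EReal`. -/
def eDom (T : EReal) : Set ℝ := {t : ℝ | 0 ≤ t ∧ (t : EReal) < T}

/-- `φ` is an integral curve of the (possibly discontinuous) vector field `F` on `[0,T)`
with initial condition `X₀`: `φ` is continuous on `[0,T)`, `φ 0 = X₀`, and there is a
closed countable subset `D` of `[0,T)` containing `0` such that for every `u ∈ D` there is
`v ∈ D ∪ {T}` with `v > u`, `(u,v) ∩ D = ∅`, `φ` is `C¹` on `(u,v)` with `φ' = F ∘ φ`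
there, and `φ'(t) → F(φ(u))` as `t → u+`; moreover, the intervals `[u,v)` cover `[0,T)`. -/
def IsNetIntegralCurve {E : Type*} [NormedAddCommGroup E] [NormedSpace ℝ E]
    (F : E → E) (X₀ : E) (T : EReal) (φ : ℝ → E) : Prop :=
  0 < T ∧ φ 0 = X₀ ∧ ContinuousOn φ (eDom T) ∧
  ∃ D : Set ℝ, D.Countable ∧ (0 : ℝ) ∈ D ∧ D ⊆ eDom T ∧ closure D ∩ eDom T ⊆ D ∧
    (∀ u ∈ D, ∃ v : EReal, ((∃ w ∈ D, (w : EReal) = v) ∨ v = T) ∧ (u : EReal) < v ∧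
      (∀ w ∈ D, (u : EReal) < (w : EReal) → v ≤ (w : EReal)) ∧
      (∀ t : ℝ, (u : EReal) < (t : EReal) → (t : EReal) < v → HasDerivAt φ (F (φ t)) t) ∧
      ContinuousOn (fun t => F (φ t)) {t : ℝ | (u : EReal) < (t : EReal) ∧ (t : EReal) < v} ∧
      Tendsto (fun t => F (φ t)) (𝓝[>] u) (𝓝 (F (φ u)))) ∧
    (∀ t ∈ eDom T, ∃ u ∈ D, u ≤ t ∧ Ioc u t ∩ D = ∅)

/-- The amenability trajectory condition: through every point `X` there is an integral
curve of the network vector field, defined on some interval `[0, t(X))` with `t(X) > 0`,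
that stays in the event set `E^{ℰ(X)}` of `X`. -/
def AmenableTraj {E A : Type*} [NormedAddCommGroup E] [NormedSpace ℝ E]
    (f : A → E → E) (ℰ : E → A) : Prop :=
  ∀ X : E, ∃ tX : ℝ, 0 < tX ∧ ∃ φ : ℝ → E,
    IsNetIntegralCurve (fun Y => f (ℰ Y) Y) X (tX : EReal) φ ∧
    ∀ t : ℝ, 0 ≤ t → t < tX → ℰ (φ t) = ℰ X

/-- Products of asynchronous networks: if `φ_A`, `φ_B` are complete
integral curves of the network vector fields `F_A`, `F_B` of two asynchronous networks,
then `(φ_A, φ_B)` is a complete integral curve of the network vector field of the product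
network (with index set `𝒜_A × 𝒜_B`, vector fields `f^{(α,β)} = f_A^α × f_B^β` and event
map `ℰ = (ℰ_A, ℰ_B)`). In particular, if both factors are proper then so is the product. -/
theorem product_of_asynchronous_networks
    {m n : ℕ} {A B : Type*} [Fintype A] [Nonempty A] [Fintype B] [Nonempty B]
    (fA : A → (Fin m → ℝ) → (Fin m → ℝ)) (ℰA : (Fin m → ℝ) → A)
    (fB : B → (Fin n → ℝ) → (Fin n → ℝ)) (ℰB : (Fin n → ℝ) → B)
    (FA : (Fin m → ℝ) → (Fin m → ℝ)) (hFA : FA = fun X => fA (ℰA X) X)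
    (FB : (Fin n → ℝ) → (Fin n → ℝ)) (hFB : FB = fun X => fB (ℰB X) X)
    (F : (Fin m → ℝ) × (Fin n → ℝ) → (Fin m → ℝ) × (Fin n → ℝ))
    (hF : F = fun X => (fA (ℰA X.1) X.1, fB (ℰB X.2) X.2)) :
    (∀ (XA : Fin m → ℝ) (XB : Fin n → ℝ) (φA : ℝ → Fin m → ℝ) (φB : ℝ → Fin n → ℝ),
      IsNetIntegralCurve FA XA (⊤ : EReal) φA → IsNetIntegralCurve FB XB (⊤ : EReal) φB →
      IsNetIntegralCurve F (XA, XB) (⊤ : EReal) (fun t => (φA t, φB t))) ∧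
    ((∀ XA : Fin m → ℝ, ∃ φA : ℝ → Fin m → ℝ, IsNetIntegralCurve FA XA (⊤ : EReal) φA) →
     (∀ XB : Fin n → ℝ, ∃ φB : ℝ → Fin n → ℝ, IsNetIntegralCurve FB XB (⊤ : EReal) φB) →
     ∀ X : (Fin m → ℝ) × (Fin n → ℝ), ∃ φ : ℝ → (Fin m → ℝ) × (Fin n → ℝ),
       IsNetIntegralCurve F X (⊤ : EReal) φ) := by
  subst hFA hFB hF
  have main : ∀ (XA : Fin m → ℝ) (XB : Fin n → ℝ) (φA : ℝ → Fin m → ℝ) (φB : ℝ → Fin n → ℝ),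
      IsNetIntegralCurve (fun X => fA (ℰA X) X) XA (⊤ : EReal) φA →
      IsNetIntegralCurve (fun X => fB (ℰB X) X) XB (⊤ : EReal) φB →
      IsNetIntegralCurve (fun X => (fA (ℰA X.1) X.1, fB (ℰB X.2) X.2)) (XA, XB) (⊤ : EReal)
        (fun t => (φA t, φB t)) := by
    rintro XA XB φA φB ⟨-, h0A, hcA, DA, hDAc, hDA0, hDAsub, hDAcl, hDAnext, hDAcov⟩
      ⟨-, h0B, hcB, DB, hDBc, hDB0, hDBsub, hDBcl, hDBnext, hDBcov⟩
    refine ⟨by norm_num, by simp [h0A, h0B], hcA.prodMk hcB, DA ∪ DB, hDAc.union hDBc,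
      Or.inl hDA0, union_subset hDAsub hDBsub, ?_, ?_, ?_⟩
    · intro x hx
      rw [closure_union] at hx
      rcases hx.1 with h | h
      · exact Or.inl (hDAcl ⟨h, hx.2⟩)
      · exact Or.inr (hDBcl ⟨h, hx.2⟩)
    · intro u hu
      have huE : u ∈ eDom ⊤ := (union_subset hDAsub hDBsub) hu
      obtain ⟨uA, huA, huAle, huAgap⟩ := hDAcov u huE
      obtain ⟨uB, huB, huBle, huBgap⟩ := hDBcov u huE
      obtain ⟨vA, hvA1, hvA2, hvAmin, hvAd, hvAc, hvAt⟩ := hDAnext uA huA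
      obtain ⟨vB, hvB1, hvB2, hvBmin, hvBd, hvBc, hvBt⟩ := hDBnext uB huB
      have hultvA : (u : EReal) < vA := by
        rcases hvA1 with ⟨w, hw, rfl⟩ | rfl
        · have hwgt : uA < w := by exact_mod_cast hvA2
          have hwu : ¬ (w ≤ u) := by
            intro hle
            have : w ∈ Ioc uA u ∩ DA := ⟨⟨hwgt, hle⟩, hw⟩
            rw [huAgap] at this; exact this
          exact_mod_cast lt_of_not_ge hwu
        · exact EReal.coe_lt_top u
      have hultvB : (u : EReal) < vB := by
        rcases hvB1 with ⟨w, hw, rfl⟩ | rfl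
        · have hwgt : uB < w := by exact_mod_cast hvB2
          have hwu : ¬ (w ≤ u) := by
            intro hle
            have : w ∈ Ioc uB u ∩ DB := ⟨⟨hwgt, hle⟩, hw⟩
            rw [huBgap] at this; exact this
          exact_mod_cast lt_of_not_ge hwu
        · exact EReal.coe_lt_top u
      refine ⟨min vA vB, ?_, lt_min hultvA hultvB, ?_, ?_, ?_, ?_⟩
      · rcases le_total vA vB with h | h
        · rw [min_eq_left h]
          rcases hvA1 with ⟨w, hw, hwv⟩ | rfl
          · exact Or.inl ⟨w, Or.inl hw, hwv⟩
          · exact Or.inr rfl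
        · rw [min_eq_right h]
          rcases hvB1 with ⟨w, hw, hwv⟩ | rfl
          · exact Or.inl ⟨w, Or.inr hw, hwv⟩
          · exact Or.inr rfl
      · rintro w (hw | hw) hwu
        · refine le_trans (min_le_left _ _) (hvAmin w hw ?_)
          exact lt_of_le_of_lt (by exact_mod_cast huAle) hwu
        · refine le_trans (min_le_right _ _) (hvBmin w hw ?_)
          exact lt_of_le_of_lt (by exact_mod_cast huBle) hwu
      · intro t ht1 ht2
        have htA : HasDerivAt φA (fA (ℰA (φA t)) (φA t)) t :=
          hvAd t (lt_of_le_of_lt (by exact_mod_cast huAle) ht1)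
            (lt_of_lt_of_le ht2 (min_le_left _ _))
        have htB : HasDerivAt φB (fB (ℰB (φB t)) (φB t)) t :=
          hvBd t (lt_of_le_of_lt (by exact_mod_cast huBle) ht1)
            (lt_of_lt_of_le ht2 (min_le_right _ _))
        exact htA.prodMk htB
      · have hsA : {t : ℝ | (u : EReal) < (t : EReal) ∧ (t : EReal) < min vA vB} ⊆
            {t : ℝ | (uA : EReal) < (t : EReal) ∧ (t : EReal) < vA} := fun t ht =>
          ⟨lt_of_le_of_lt (by exact_mod_cast huAle) ht.1,
            lt_of_lt_of_le ht.2 (min_le_left _ _)⟩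
        have hsB : {t : ℝ | (u : EReal) < (t : EReal) ∧ (t : EReal) < min vA vB} ⊆
            {t : ℝ | (uB : EReal) < (t : EReal) ∧ (t : EReal) < vB} := fun t ht =>
          ⟨lt_of_le_of_lt (by exact_mod_cast huBle) ht.1,
            lt_of_lt_of_le ht.2 (min_le_right _ _)⟩
        exact (hvAc.mono hsA).prodMk (hvBc.mono hsB)
      · have hA : Tendsto (fun t => fA (ℰA (φA t)) (φA t)) (𝓝[>] u)
            (𝓝 (fA (ℰA (φA u)) (φA u))) := by
          rcases eq_or_lt_of_le huAle with rfl | h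
          · exact hvAt
          · have hopen : IsOpen {t : ℝ | (uA : EReal) < (t : EReal) ∧ (t : EReal) < vA} :=
              IsOpen.preimage continuous_coe_real_ereal isOpen_Ioo
            have hmem : u ∈ {t : ℝ | (uA : EReal) < (t : EReal) ∧ (t : EReal) < vA} :=
              ⟨by exact_mod_cast h, hultvA⟩
            exact ((hvAc.continuousAt (hopen.mem_nhds hmem)).tendsto).mono_left
              nhdsWithin_le_nhds
        have hB : Tendsto (fun t => fB (ℰB (φB t)) (φB t)) (𝓝[>] u)
            (𝓝 (fB (ℰB (φB u)) (φB u))) := by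
          rcases eq_or_lt_of_le huBle with rfl | h
          · exact hvBt
          · have hopen : IsOpen {t : ℝ | (uB : EReal) < (t : EReal) ∧ (t : EReal) < vB} :=
              IsOpen.preimage continuous_coe_real_ereal isOpen_Ioo
            have hmem : u ∈ {t : ℝ | (uB : EReal) < (t : EReal) ∧ (t : EReal) < vB} :=
              ⟨by exact_mod_cast h, hultvB⟩
            exact ((hvBc.continuousAt (hopen.mem_nhds hmem)).tendsto).mono_left
              nhdsWithin_le_nhds
        exact hA.prodMk_nhds hB
    · intro t ht
      obtain ⟨uA, huA, huAle, huAgap⟩ := hDAcov t ht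
      obtain ⟨uB, huB, huBle, huBgap⟩ := hDBcov t ht
      refine ⟨max uA uB, ?_, max_le huAle huBle, ?_⟩
      · rcases le_total uA uB with h | h
        · rw [max_eq_right h]; exact Or.inr huB
        · rw [max_eq_left h]; exact Or.inl huA
      · ext w
        simp only [mem_inter_iff, mem_Ioc, mem_union, mem_empty_iff_false, iff_false, not_and]
        rintro ⟨hw1, hw2⟩ (hw | hw)
        · have : w ∈ Ioc uA t ∩ DA := ⟨⟨lt_of_le_of_lt (le_max_left _ _) hw1, hw2⟩, hw⟩
          rw [huAgap] at this; exact this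
        · have : w ∈ Ioc uB t ∩ DB := ⟨⟨lt_of_le_of_lt (le_max_right _ _) hw1, hw2⟩, hw⟩
          rw [huBgap] at this; exact this
  refine ⟨main, ?_⟩
  intro h1 h2 X
  obtain ⟨φA, hA⟩ := h1 X.1
  obtain ⟨φB, hB⟩ := h2 X.2
  exact ⟨fun t => (φA t, φB t), main X.1 X.2 φA φB hA hB⟩
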